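/- Fix x ∈ ℝ and consider the initial value problem dG/dt = λ[ (F(μ(t)) − 1)·G(t) + (F(x) − F(μ(t)))_+ ], G(0) = F₀(x), where μ solves μ' = λφ(μ), μ(0) = μ₀. Its unique solution is G(t) = φ(μ(t))·[ F₀(x)/φ(μ₀) + ∫_{μ₀}^{μ(t)} (F(x) − F(w))_+ / φ(w)² dw ]. -/

import Mathlib

open MeasureTheory Set Filter Topology

private lemma growth_aux {f : ℝ → ℝ} {a b : ℝ} {S : Set ℝ} (hS : S.Countable) (hab : a ≤ b)
    (hcont : ContinuousOn f (Icc a b))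
    (hderiv : ∀ t, t ∈ Ico a b → t ∉ S → HasDerivAt f 0 t)
    {ε : ℝ} (hε : 0 < ε) : f b ≤ f a + ε * (b - a) + ε := by
  obtain ⟨e, he⟩ : ∃ e : ℕ → ℝ, S ⊆ range e := by
    rcases Set.Countable.exists_eq_range (hS.insert a) (insert_nonempty _ _) with ⟨e, he⟩
    exact ⟨e, (subset_insert a S).trans he.subset⟩
  set w : ℕ → ℝ := fun n => ε / 2 / 2 ^ n with hw
  have hwpos : ∀ n, 0 < w n := fun n => by positivity
  have hwsum : Summable w := summable_geometric_two' ε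
  have hwtsum : ∑' n, w n = ε := tsum_geometric_two' ε
  set h : ℝ → ℝ := fun y => ∑' n, if e n < y then w n else 0 with hh
  have hsummable : ∀ y, Summable (fun n => if e n < y then w n else 0) := by
    intro y
    apply hwsum.of_nonneg_of_le (fun n => by positivity)
    intro n; split
    · exact le_rfl
    · exact (hwpos n).le
  have hmono : Monotone h := by
    intro y z hyz
    apply Summable.tsum_le_tsum _ (hsummable y) (hsummable z)
    intro k
    by_cases hk : e k < y
    · simp [hk, hk.trans_le hyz]
    · simp only [hk, if_false]
      split
      · exact (hwpos k).le
      · exact le_rfl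
  have hnonneg : ∀ y, 0 ≤ h y := by
    intro y
    apply tsum_nonneg
    intro k; split
    · exact (hwpos k).le
    · exact le_rfl
  have hle : ∀ y, h y ≤ ε := by
    intro y
    rw [← hwtsum]
    apply Summable.tsum_le_tsum _ (hsummable y) hwsum
    intro k; split
    · exact le_rfl
    · exact (hwpos k).le
  set s : Set ℝ := {y | y ∈ Icc a b ∧ f y ≤ f a + ε * (y - a) + h y} with hs
  have hsub : s ⊆ Icc a b := fun y hy => hy.1
  have ha_s : a ∈ s := ⟨⟨le_rfl, hab⟩, by simpa using hnonneg a⟩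
  have hne : s.Nonempty := ⟨a, ha_s⟩
  have hbdd : BddAbove s := ⟨b, fun y hy => hy.1.2⟩
  set c := sSup s with hc
  have hacs : a ≤ c := le_csSup hbdd ha_s
  have hcb : c ≤ b := csSup_le hne (fun y hy => hy.1.2)
  have hcIcc : c ∈ Icc a b := ⟨hacs, hcb⟩
  have hcs : c ∈ s := by
    refine ⟨hcIcc, ?_⟩
    have hcl : c ∈ closure s := csSup_mem_closure hne hbdd
    have hnb : (𝓝[s] c).NeBot := mem_closure_iff_nhdsWithin_neBot.1 hcl
    have htd : Tendsto f (𝓝[s] c) (𝓝 (f c)) := (hcont c hcIcc).mono hsub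
    refine le_of_tendsto htd ?_
    filter_upwards [eventually_mem_nhdsWithin] with y hy
    have h1 : y ≤ c := le_csSup hbdd hy
    have := hy.2
    have := hmono h1
    nlinarith [hε]
  -- show c = b
  rcases eq_or_lt_of_le hcb with heq | hclt
  · have h1 := hcs.2
    rw [heq] at h1
    have := hle b
    linarith
  · exfalso
    by_cases hcS : c ∈ S
    · -- exceptional point: use continuity and budget w n
      obtain ⟨n, hn⟩ := he hcS
      have htd : Tendsto f (𝓝[>] c) (𝓝 (f c)) := by
        rw [← nhdsWithin_Ioo_eq_nhdsGT hclt]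
        exact (hcont c hcIcc).mono (fun y hy => ⟨hacs.trans hy.1.le, hy.2.le⟩)
      have h1 : ∀ᶠ y in 𝓝[>] c, dist (f y) (f c) < w n :=
        Metric.tendsto_nhds.mp htd _ (hwpos n)
      have h2 : ∀ᶠ y in 𝓝[>] c, y ∈ Ioo c b := Ioo_mem_nhdsGT hclt
      obtain ⟨y, hy1, hy2⟩ := (h1.and h2).exists
      have hfy : f y - f c ≤ w n := by
        rw [Real.dist_eq, abs_sub_lt_iff] at hy1
        linarith [hy1.1]
      have hkey : h c + w n ≤ h y := by
        have hsum2 : Summable (fun k => if k = n then w n else 0) :=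
          (hasSum_ite_eq n (w n)).summable
        have h3 : ∀ k, ((if e k < c then w k else 0) + if k = n then w n else 0)
            ≤ (if e k < y then w k else 0) := by
          intro k
          rcases eq_or_ne k n with rfl | hk
          · have h4 : ¬ (e k < c) := by rw [hn]; exact lt_irrefl c
            have h5 : e k < y := by rw [hn]; exact hy2.1
            simp [h4, h5]
          · simp only [hk, if_false, add_zero]
            split
            · next hek => simp [hek.trans hy2.1]
            · split
              · exact (hwpos k).le
              · exact le_rfl
        calc h c + w n = ∑' k, ((if e k < c then w k else 0) + if k = n then w n else 0) := by
              rw [Summable.tsum_add (hsummable c) hsum2, tsum_ite_eq]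
          _ ≤ h y := Summable.tsum_le_tsum h3 ((hsummable c).add hsum2) (hsummable y)
      have hys : y ∈ s := by
        refine ⟨⟨hacs.trans hy2.1.le, hy2.2.le⟩, ?_⟩
        have := hcs.2
        have hcy : c ≤ y := hy2.1.le
        nlinarith [hε]
      exact absurd (le_csSup hbdd hys) (not_le.2 hy2.1)
    · -- regular point: derivative is 0
      have hd := hderiv c ⟨hacs, hclt⟩ hcS
      rw [hasDerivAt_iff_tendsto_slope] at hd
      have hd' : Tendsto (slope f c) (𝓝[>] c) (𝓝 0) :=
        hd.mono_left (nhdsWithin_mono c (fun y hy => ne_of_gt hy))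
      have h1 : ∀ᶠ y in 𝓝[>] c, slope f c y < ε := hd' (Iio_mem_nhds hε)
      have h2 : ∀ᶠ y in 𝓝[>] c, y ∈ Ioo c b := Ioo_mem_nhdsGT hclt
      obtain ⟨y, hy1, hy2⟩ := (h1.and h2).exists
      rw [slope_def_field] at hy1
      have hfy : f y - f c ≤ ε * (y - c) :=
        le_of_lt ((div_lt_iff₀ (sub_pos.2 hy2.1)).mp hy1)
      have hys : y ∈ s := by
        refine ⟨⟨hacs.trans hy2.1.le, hy2.2.le⟩, ?_⟩
        have := hcs.2
        have := hmono hy2.1.le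
        nlinarith [hε]
      exact absurd (le_csSup hbdd hys) (not_le.2 hy2.1)

private lemma const_aux {f : ℝ → ℝ} {a b : ℝ} {S : Set ℝ} (hS : S.Countable) (hab : a ≤ b)
    (hcont : ContinuousOn f (Icc a b))
    (hderiv : ∀ t, t ∈ Ico a b → t ∉ S → HasDerivAt f 0 t) :
    f b = f a := by
  have key : ∀ g : ℝ → ℝ, ContinuousOn g (Icc a b) →
      (∀ t, t ∈ Ico a b → t ∉ S → HasDerivAt g 0 t) → g b ≤ g a := by
    intro g hg hg'
    by_contra hlt
    push_neg at hlt
    set ε := (g b - g a) / (b - a + 2) with hε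
    have hba : (0:ℝ) < b - a + 2 := by linarith
    have hεpos : 0 < ε := div_pos (by linarith) hba
    have hgrow := growth_aux hS hab hg hg' hεpos
    have h2 : ε * (b - a) + 2 * ε = g b - g a := by
      rw [hε]; field_simp
    linarith
  have h1 := key f hcont hderiv
  have h2 := key (fun y => -f y) hcont.neg (fun t ht hts => by
    have := (hderiv t ht hts).neg; rw [neg_zero] at this; exact this)
  simp only [neg_le_neg_iff] at h2
  linarith

theorem stmt15 {Ω : Type*} [MeasurableSpace Ω] (P : Measure Ω) [IsProbabilityMeasure P]
    (X : Ω → ℝ) (hX : Measurable X)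
    (hint : Integrable (fun ω => max (X ω) 0) P)
    (F : ℝ → ℝ) (hF : ∀ x, F x = (P {ω | X ω ≤ x}).toReal)
    (M : EReal) (hM : M = sSup ((fun x : ℝ => (x : EReal)) '' {x : ℝ | F x < 1}))
    (φ : ℝ → ℝ) (hφ : ∀ x, φ x = ∫ u in Ioi x, (1 - F u))
    (lam μ₀ : ℝ) (hlam : 0 < lam) (hμ₀ : 0 ≤ μ₀) (hμ₀M : (μ₀ : EReal) < M)
    (μ : ℝ → ℝ) (hinit : μ 0 = μ₀)
    (hode : ∀ t : ℝ, 0 ≤ t → HasDerivAt μ (lam * φ (μ t)) t)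
    (F₀ : ℝ → ℝ) (x : ℝ) (G : ℝ → ℝ) (hG0 : G 0 = F₀ x)
    (hGode : ∀ t : ℝ, 0 ≤ t →
      HasDerivAt G (lam * ((F (μ t) - 1) * G t + max (F x - F (μ t)) 0)) t) :
    ∀ t : ℝ, 0 ≤ t →
      G t = φ (μ t) *
        (F₀ x / φ μ₀ + ∫ w in μ₀..(μ t), max (F x - F w) 0 / (φ w) ^ 2) := by
  -- ## Basic facts about F
  have hFmono : Monotone F := by
    intro u v huv
    rw [hF u, hF v]
    exact ENNReal.toReal_mono (measure_ne_top P _)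
      (measure_mono (fun ω hω => le_trans hω huv))
  have hFmeas : Measurable F := hFmono.measurable
  have hFnonneg : ∀ y, 0 ≤ F y := fun y => by rw [hF y]; exact ENNReal.toReal_nonneg
  have hFle : ∀ y, F y ≤ 1 := by
    intro y
    rw [hF y]
    calc (P {ω | X ω ≤ y}).toReal
        ≤ (P univ).toReal :=
          ENNReal.toReal_mono (measure_ne_top P _) (measure_mono (subset_univ _))
      _ = 1 := by simp
  have hF1 : ∀ u : ℝ, 1 - F u = (P {ω | u < X ω}).toReal := by
    intro u
    have hset : {ω | u < X ω} = {ω | X ω ≤ u}ᶜ := by ext ω; simp [not_le]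
    have hms : MeasurableSet {ω | X ω ≤ u} := hX measurableSet_Iic
    rw [hset, prob_compl_eq_one_sub hms,
      ENNReal.toReal_sub_of_le prob_le_one ENNReal.one_ne_top, hF u]
    simp
  -- ## Integrability of 1 - F on right rays
  have hInt : ∀ a : ℝ, IntegrableOn (fun u => 1 - F u) (Ioi a) := by
    intro a
    have hmb : Measurable fun u : ℝ => 1 - F u := measurable_const.sub hFmeas
    refine ⟨hmb.aestronglyMeasurable, ?_⟩
    have key : ∀ u : ℝ, (‖1 - F u‖₊ : ENNReal) = P {ω | u < X ω} := by
      intro u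
      rw [hF1 u, ← enorm_eq_nnnorm, Real.enorm_eq_ofReal ENNReal.toReal_nonneg,
        ENNReal.ofReal_toReal (measure_ne_top P _)]
    have hsplit : Ioi a = Ioc a (max a 0) ∪ Ioi (max a 0) :=
      (Ioc_union_Ioi_eq_Ioi (le_max_left a 0)).symm
    have hlayer : ∫⁻ u in Ioi (0:ℝ), P {ω | u < X ω}
        = ∫⁻ ω, ENNReal.ofReal (max (X ω) 0) ∂P := by
      rw [lintegral_eq_lintegral_meas_lt P (f := fun ω => max (X ω) 0)
        (ae_of_all _ fun ω => le_max_right _ _) (hX.max measurable_const).aemeasurable]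
      refine setLIntegral_congr_fun measurableSet_Ioi (fun u hu => ?_)
      congr 1
      ext ω
      simp only [mem_setOf_eq, lt_max_iff, or_iff_left (not_lt.mpr (le_of_lt (mem_Ioi.mp hu)))]
    have hfin : ∫⁻ ω, ENNReal.ofReal (max (X ω) 0) ∂P < ⊤ := by
      have := hint.hasFiniteIntegral
      rw [HasFiniteIntegral] at this
      refine lt_of_le_of_lt (le_of_eq ?_) this
      exact lintegral_congr fun ω => (Real.enorm_eq_ofReal (le_max_right _ _)).symm
    rw [HasFiniteIntegral]
    calc ∫⁻ u in Ioi a, (‖1 - F u‖₊ : ENNReal)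
        = ∫⁻ u in Ioi a, P {ω | u < X ω} := by simp_rw [key]
      _ = ∫⁻ u in Ioc a (max a 0) ∪ Ioi (max a 0), P {ω | u < X ω} := by rw [← hsplit]
      _ ≤ (∫⁻ u in Ioc a (max a 0), P {ω | u < X ω})
          + ∫⁻ u in Ioi (max a 0), P {ω | u < X ω} := lintegral_union_le _ _ _
      _ ≤ (∫⁻ _ in Ioc a (max a 0), 1) + ∫⁻ u in Ioi (0:ℝ), P {ω | u < X ω} := by
          gcongr with u
          · exact prob_le_one
          · exact le_max_right a 0
      _ < ⊤ := by
          rw [setLIntegral_one, hlayer]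
          exact ENNReal.add_lt_top.mpr ⟨measure_Ioc_lt_top, hfin⟩
  -- ## φ basics
  have hφsplit : ∀ a b : ℝ, a ≤ b → φ a - φ b = ∫ u in Ioc a b, (1 - F u) := by
    intro a b hab
    rw [hφ a, hφ b]
    have h1 : Ioi a = Ioc a b ∪ Ioi b := (Ioc_union_Ioi_eq_Ioi hab).symm
    rw [h1, setIntegral_union (Ioc_disjoint_Ioi le_rfl) measurableSet_Ioi
      ((hInt a).mono_set Ioc_subset_Ioi_self) (hInt b)]
    ring
  have hφrep : ∀ y : ℝ, φ y = φ μ₀ - ∫ u in μ₀..y, (1 - F u) := by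
    intro y
    rcases le_total μ₀ y with h | h
    · rw [intervalIntegral.integral_of_le h, ← hφsplit μ₀ y h]; ring
    · rw [intervalIntegral.integral_symm, intervalIntegral.integral_of_le h,
        ← hφsplit y μ₀ h]
      ring
  have hφii : ∀ a b : ℝ, IntervalIntegrable (fun u => 1 - F u) volume a b := by
    intro a b
    rw [intervalIntegrable_iff]
    exact (hInt (min a b - 1)).mono_set (fun u hu => by
      simp only [mem_Ioi]
      have := hu.1
      simp only [uIoc, mem_Ioc] at hu
      linarith [hu.1])
  have hφcont : Continuous φ := by
    have h1 : Continuous fun y => φ μ₀ - ∫ u in μ₀..y, (1 - F u) :=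
      continuous_const.sub (intervalIntegral.continuous_primitive hφii μ₀)
    exact h1.congr fun y => (hφrep y).symm
  have hφnonneg : ∀ y, 0 ≤ φ y := by
    intro y
    rw [hφ y]
    exact setIntegral_nonneg measurableSet_Ioi fun u _ => by linarith [hFle u]
  have hφanti : Antitone φ := by
    intro a b hab
    have := hφsplit a b hab
    have h2 : 0 ≤ ∫ u in Ioc a b, (1 - F u) :=
      setIntegral_nonneg measurableSet_Ioc fun u _ => by linarith [hFle u]
    linarith
  have hφpos : ∀ w : ℝ, (w : EReal) < M → 0 < φ w := by
    intro w hw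
    rw [hM, lt_sSup_iff] at hw
    obtain ⟨β, hβmem, hwβ⟩ := hw
    obtain ⟨x₀, hx₀, rfl⟩ := hβmem
    have hwβ' : (w : EReal) < (x₀ : EReal) := hwβ
    have hwx₀ : w < x₀ := by exact_mod_cast hwβ'
    have hFx₀ : F x₀ < 1 := hx₀
    have h1 : ∫ u in Ioc w x₀, (1 - F x₀) ≤ ∫ u in Ioc w x₀, (1 - F u) := by
      refine setIntegral_mono_on (integrableOn_const measure_Ioc_lt_top.ne)
        ((hInt w).mono_set Ioc_subset_Ioi_self) measurableSet_Ioc ?_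
      intro u hu
      have := hFmono hu.2
      linarith
    have h2 : ∫ u in Ioc w x₀, (1 - F x₀) = (x₀ - w) * (1 - F x₀) := by
      rw [setIntegral_const, Real.volume_real_Ioc_of_le (by linarith), smul_eq_mul]
    have h3 : ∫ u in Ioc w x₀, (1 - F u) ≤ φ w := by
      rw [hφ w]
      refine setIntegral_mono_set (hInt w) ?_ ?_
      · exact ae_of_all _ fun u => by simp only [Pi.zero_apply]; linarith [hFle u]
      · exact HasSubset.Subset.eventuallyLE Ioc_subset_Ioi_self
    nlinarith
  -- ## μ stays strictly below M
  have hμcontOn : ContinuousOn μ (Ici 0) :=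
    fun t ht => (hode t ht).continuousAt.continuousWithinAt
  have hμM : ∀ t : ℝ, 0 ≤ t → (μ t : EReal) < M := by
    induction M using EReal.rec with
    | bot => exact absurd hμ₀M (by simp)
    | top => intro t _; exact EReal.coe_lt_top _
    | coe r =>
      have hμ₀r : μ₀ < r := by exact_mod_cast hμ₀M
      have hF1r : ∀ u : ℝ, r < u → F u = 1 := by
        intro u hu
        by_contra hne
        have hlt : F u < 1 := lt_of_le_of_ne (hFle u) hne
        have : (u : EReal) ≤ (r : EReal) := by
          rw [hM]
          exact le_sSup ⟨u, hlt, rfl⟩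
        have : u ≤ r := by exact_mod_cast this
        linarith
      have hφub : ∀ w : ℝ, w ≤ r → φ w ≤ r - w := by
        intro w hw
        have hφr : φ r = 0 := by
          rw [hφ r]
          rw [setIntegral_congr_fun measurableSet_Ioi
            (g := fun _ : ℝ => (0:ℝ)) (fun u hu => by rw [hF1r u hu]; ring)]
          simp
        have h1 := hφsplit w r hw
        have h2 : ∫ u in Ioc w r, (1 - F u) ≤ ∫ u in Ioc w r, (1:ℝ) := by
          refine setIntegral_mono_on ((hInt w).mono_set Ioc_subset_Ioi_self)
            (integrableOn_const measure_Ioc_lt_top.ne) measurableSet_Ioc ?_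
          intro u _
          linarith [hFnonneg u]
        have h3 : ∫ u in Ioc w r, (1:ℝ) = r - w := by
          rw [setIntegral_const, Real.volume_real_Ioc_of_le (by linarith),
            smul_eq_mul, mul_one]
        rw [hφr] at h1
        linarith
      intro t ht
      rw [EReal.coe_lt_coe_iff]
      by_contra hcon
      push_neg at hcon
      set A : Set ℝ := {τ | 0 ≤ τ ∧ r ≤ μ τ} with hA
      have hAne : A.Nonempty := ⟨t, ht, hcon⟩
      have hAbdd : BddBelow A := ⟨0, fun τ hτ => hτ.1⟩
      set t₀ := sInf A with ht₀
      have ht₀0 : 0 ≤ t₀ := le_csInf hAne fun τ hτ => hτ.1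
      have hμt₀ : r ≤ μ t₀ := by
        have hcl := csInf_mem_closure hAne hAbdd
        have hnb : (𝓝[A] t₀).NeBot := mem_closure_iff_nhdsWithin_neBot.1 hcl
        have htd : Tendsto μ (𝓝[A] t₀) (𝓝 (μ t₀)) :=
          (hode t₀ ht₀0).continuousAt.continuousWithinAt
        exact ge_of_tendsto htd (eventually_mem_nhdsWithin.mono fun τ hτ => hτ.2)
      have ht₀pos : 0 < t₀ := by
        rcases eq_or_lt_of_le ht₀0 with heq | h
        · exfalso
          rw [← heq, hinit] at hμt₀
          linarith
        · exact h
      have hlt : ∀ τ : ℝ, 0 ≤ τ → τ < t₀ → μ τ < r := by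
        intro τ hτ0 hτt
        by_contra hge
        push_neg at hge
        exact absurd (csInf_le hAbdd ⟨hτ0, hge⟩) (not_le.2 hτt)
      set f : ℝ → ℝ := fun τ => (r - μ τ) * Real.exp (lam * τ) with hfdef
      have hfd : ∀ τ : ℝ, 0 ≤ τ → HasDerivAt f
          (-(lam * φ (μ τ)) * Real.exp (lam * τ)
            + (r - μ τ) * (Real.exp (lam * τ) * lam)) τ := by
        intro τ hτ
        have h1 : HasDerivAt (fun τ => r - μ τ) (-(lam * φ (μ τ))) τ :=
          (hode τ hτ).const_sub r
        have h2 : HasDerivAt (fun τ => Real.exp (lam * τ))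
            (Real.exp (lam * τ) * lam) τ := by
          have := (Real.hasDerivAt_exp (lam * τ)).comp τ
            ((hasDerivAt_id τ).const_mul lam)
          simp only [mul_one] at this; exact this
        exact h1.mul h2
      have hfmono : MonotoneOn f (Icc 0 t₀) := by
        apply monotoneOn_of_deriv_nonneg (convex_Icc 0 t₀)
        · exact fun τ hτ => (hfd τ hτ.1).continuousAt.continuousWithinAt
        · rw [interior_Icc]
          exact fun τ hτ => ((hfd τ hτ.1.le).differentiableAt).differentiableWithinAt
        · rw [interior_Icc]
          intro τ hτ
          rw [(hfd τ hτ.1.le).deriv]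
          have hμτ : μ τ < r := hlt τ hτ.1.le hτ.2
          have hφτ := hφub (μ τ) hμτ.le
          have hE := Real.exp_pos (lam * τ)
          nlinarith [mul_nonneg (mul_pos hlam hE).le (sub_nonneg.2 hφτ)]
      have h1 : f 0 ≤ f t₀ := hfmono ⟨le_rfl, ht₀0⟩ ⟨ht₀0, le_rfl⟩ ht₀0
      have hf0 : f 0 = r - μ₀ := by simp [hfdef, hinit]
      have hft₀ : f t₀ ≤ 0 :=
        mul_nonpos_of_nonpos_of_nonneg (by linarith) (Real.exp_pos _).le
      rw [hf0] at h1
      linarith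
  have hψpos : ∀ t : ℝ, 0 ≤ t → 0 < φ (μ t) := fun t ht => hφpos _ (hμM t ht)
  have hμmono : StrictMonoOn μ (Ici 0) := by
    apply strictMonoOn_of_deriv_pos (convex_Ici 0) hμcontOn
    intro t ht
    rw [interior_Ici] at ht
    rw [(hode t ht.le).deriv]
    exact mul_pos hlam (hψpos t ht.le)
  -- ## countable exceptional set
  set S : Set ℝ := {t | 0 ≤ t ∧ ¬ContinuousAt F (μ t)} with hSdef
  have hScount : S.Countable := by
    have hD : {y : ℝ | ¬ContinuousAt F y}.Countable := hFmono.countable_not_continuousAt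
    have hmaps : MapsTo μ S {y : ℝ | ¬ContinuousAt F y} := fun t ht => ht.2
    have hinj : InjOn μ S := (hμmono.injOn).mono fun t ht => ht.1
    exact hmaps.countable_of_injOn hinj hD
  -- ## main argument
  intro T hT
  set g : ℝ → ℝ := fun w => max (F x - F w) 0 / φ w ^ 2 with hgdef
  -- choose a real z strictly between μ T and M
  obtain ⟨z, hz1, hz2⟩ : ∃ z : ℝ, μ T < z ∧ (z : EReal) < M := by
    obtain ⟨zE, hzE1, hzE2⟩ := exists_between (hμM T hT)
    induction zE using EReal.rec with
    | bot => exact absurd hzE1 (by simp)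
    | top => exact absurd hzE2 (by simp [not_top_lt])
    | coe z => exact ⟨z, by exact_mod_cast hzE1, hzE2⟩
  have hφz : 0 < φ z := hφpos z hz2
  have hμmonoOn : MonotoneOn μ (Ici 0) := hμmono.monotoneOn
  have hμ0T : μ₀ ≤ μ T := by
    rw [← hinit]
    exact hμmonoOn self_mem_Ici hT hT
  have hμ₀z : μ₀ ≤ z := hμ0T.trans hz1.le
  have hgnonneg : ∀ w, 0 ≤ g w := fun w => by
    apply div_nonneg (le_max_right _ _) (sq_nonneg _)
  have hgmeas : Measurable g :=
    ((measurable_const.sub hFmeas).max measurable_const).div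
      ((hφcont.measurable).pow_const 2)
  have hgbdd : ∀ w ≤ z, g w ≤ (φ z ^ 2)⁻¹ := by
    intro w hw
    rw [hgdef]
    have h1 : max (F x - F w) 0 ≤ 1 :=
      max_le (by linarith [hFle x, hFnonneg w]) zero_le_one
    have h2 : φ z ≤ φ w := hφanti hw
    have h3 : 0 < φ z ^ 2 := by positivity
    calc max (F x - F w) 0 / φ w ^ 2 ≤ 1 / φ z ^ 2 :=
          div_le_div₀ zero_le_one h1 h3 (pow_le_pow_left₀ hφz.le h2 2)
      _ = (φ z ^ 2)⁻¹ := one_div _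
  have hgInt : IntegrableOn g (Icc μ₀ z) := by
    apply Measure.integrableOn_of_bounded (M := (φ z ^ 2)⁻¹) measure_Icc_lt_top.ne
      hgmeas.aestronglyMeasurable
    filter_upwards [ae_restrict_mem measurableSet_Icc] with w hw
    rw [Real.norm_eq_abs, abs_of_nonneg (hgnonneg w)]
    exact hgbdd w hw.2
  have hprimg_cont : ContinuousOn (fun y => ∫ w in μ₀..y, g w) (Icc μ₀ z) := by
    have := intervalIntegral.continuousOn_primitive_interval
      (a := μ₀) (b := z) (μ := volume) (f := g) (by rwa [uIcc_of_le hμ₀z])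
    rwa [uIcc_of_le hμ₀z] at this
  set H : ℝ → ℝ := fun τ => G τ / φ (μ τ) - ∫ w in μ₀..μ τ, g w with hHdef
  have hmaps : MapsTo μ (Icc 0 T) (Icc μ₀ z) := by
    intro τ hτ
    constructor
    · rw [← hinit]; exact hμmonoOn self_mem_Ici hτ.1 hτ.1
    · exact (hμmonoOn hτ.1 hT hτ.2).trans hz1.le
  have hHcont : ContinuousOn H (Icc 0 T) := by
    have hGc : ContinuousOn G (Icc 0 T) :=
      fun τ hτ => ((hGode τ hτ.1).continuousAt).continuousWithinAt
    have hμc : ContinuousOn μ (Icc 0 T) := hμcontOn.mono fun τ hτ => hτ.1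
    have hψc : ContinuousOn (fun τ => φ (μ τ)) (Icc 0 T) :=
      hφcont.comp_continuousOn hμc
    exact (hGc.div hψc fun τ hτ => (hψpos τ hτ.1).ne').sub
      (hprimg_cont.comp hμc hmaps)
  have hHderiv : ∀ t : ℝ, t ∈ Ico 0 T → t ∉ S → HasDerivAt H 0 t := by
    intro t ht htS
    have ht0 : 0 ≤ t := ht.1
    have hcF : ContinuousAt F (μ t) := by
      by_contra hc
      exact htS ⟨ht0, hc⟩
    have hμd := hode t ht0
    have hψt : 0 < φ (μ t) := hψpos t ht0
    have hμtz : μ t ≤ z := (hmaps ⟨ht0, ht.2.le⟩).2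
    -- derivative of φ at μ t
    have hφd : HasDerivAt φ (F (μ t) - 1) (μ t) := by
      have hd' : HasDerivAt (fun y => ∫ u in μ₀..y, (1 - F u)) (1 - F (μ t)) (μ t) :=
        intervalIntegral.integral_hasDerivAt_right (hφii μ₀ (μ t))
          ((measurable_const.sub hFmeas).stronglyMeasurable.stronglyMeasurableAtFilter)
          (continuousAt_const.sub hcF)
      have h0 : HasDerivAt (fun y => φ μ₀ - ∫ u in μ₀..y, (1 - F u))
          (-(1 - F (μ t))) (μ t) := hd'.const_sub _
      have h1 : HasDerivAt φ (-(1 - F (μ t))) (μ t) :=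
        h0.congr_of_eventuallyEq (Eventually.of_forall hφrep)
      convert h1 using 1
      ring
    have hψd : HasDerivAt (fun τ => φ (μ τ)) ((F (μ t) - 1) * (lam * φ (μ t))) t :=
      hφd.comp t hμd
    -- derivative of primitive of g at μ t
    have hgii : IntervalIntegrable g volume μ₀ (μ t) := by
      have : IntegrableOn g (uIcc μ₀ (μ t)) := by
        apply hgInt.mono_set
        rw [uIcc_of_le (hmaps ⟨ht0, ht.2.le⟩).1]
        exact Icc_subset_Icc le_rfl hμtz
      exact this.intervalIntegrable
    have hgc : ContinuousAt g (μ t) := by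
      apply ContinuousAt.div ((continuousAt_const.sub hcF).max continuousAt_const)
        ((hφcont.continuousAt).pow 2) (pow_pos hψt 2).ne'
    have hgd' : HasDerivAt (fun y => ∫ w in μ₀..y, g w) (g (μ t)) (μ t) :=
      intervalIntegral.integral_hasDerivAt_right hgii
        (hgmeas.stronglyMeasurable.stronglyMeasurableAtFilter) hgc
    have hId : HasDerivAt (fun τ => ∫ w in μ₀..μ τ, g w)
        (g (μ t) * (lam * φ (μ t))) t := hgd'.comp t hμd
    have hGd := hGode t ht0
    have hq : HasDerivAt (fun τ => G τ / φ (μ τ))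
        ((lam * ((F (μ t) - 1) * G t + max (F x - F (μ t)) 0) * φ (μ t)
          - G t * ((F (μ t) - 1) * (lam * φ (μ t)))) / φ (μ t) ^ 2) t :=
      hGd.div hψd hψt.ne'
    have := hq.sub hId
    refine this.congr_deriv ?_
    rw [hgdef]
    field_simp
    ring
  -- apply the constancy lemma
  have hHT : H T = H 0 := const_aux hScount hT hHcont hHderiv
  have hH0 : H 0 = F₀ x / φ μ₀ := by
    rw [hHdef]
    simp [hinit, hG0]
  rw [hH0] at hHT
  have hψT : 0 < φ (μ T) := hψpos T hT
  have hHT' : G T / φ (μ T) = F₀ x / φ μ₀ + ∫ w in μ₀..μ T, g w := by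
    rw [hHdef] at hHT
    simp only at hHT
    linarith
  rw [div_eq_iff hψT.ne'] at hHT'
  rw [hHT']
  ring
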